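/- With the same setup (σ_t := (∫_0^t g² )^{1/2}, p_r a Gaussian mixture with respect to μ_data), the weighted Fisher-information-type integral ∫_ε^T g(t)² |∇p_{σ_t}(x)|² / p_{σ_t}(x) dt is bounded above by (2π)^{−d/2} ∫_{ℝ^d} Φ_{σ_ε}^{σ_T}((d+2)/2, |x−x̃|²/2) |x̃−x|² dμ_data(x̃), which in turn is bounded uniformly in x by 2(2π)^{−d/2} sup_{z≥0} [ z Φ_{σ_ε}^{σ_T}((d+2)/2, z) ] < ∞. -/

import Mathlib

open MeasureTheory Real Filter

/-- `Φ a b s z = ∫_{1/b²}^{1/a²} u^(s-1) e^{-z u} du`. -/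
noncomputable def Phi (a b s z : ℝ) : ℝ :=
  ∫ u in (1 / b ^ 2)..(1 / a ^ 2), u ^ (s - 1) * Real.exp (-z * u)

/-- `σ_t := (∫_0^t g²)^{1/2}`. -/
noncomputable def sigma (g : ℝ → ℝ) (t : ℝ) : ℝ :=
  Real.sqrt (∫ η in (0 : ℝ)..t, g η ^ 2)

/-- Gaussian mixture density `p_r(x)`. -/
noncomputable def pdens (d : ℕ) (μ : Measure (EuclideanSpace ℝ (Fin d)))
    (r : ℝ) (x : EuclideanSpace ℝ (Fin d)) : ℝ :=
  ∫ xt, (2 * Real.pi * r ^ 2) ^ (-(d : ℝ) / 2) *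
    Real.exp (-‖x - xt‖ ^ 2 / (2 * r ^ 2)) ∂μ

/-- `∇p_r(x)`. -/
noncomputable def gradP (d : ℕ) (μ : Measure (EuclideanSpace ℝ (Fin d)))
    (r : ℝ) (x : EuclideanSpace ℝ (Fin d)) : EuclideanSpace ℝ (Fin d) :=
  ∫ xt, ((2 * Real.pi * r ^ 2) ^ (-(d : ℝ) / 2) *
    Real.exp (-‖x - xt‖ ^ 2 / (2 * r ^ 2)) / r ^ 2) • (xt - x) ∂μ

section Aux
open Set

variable {φ : ℝ → ℝ}

lemma prim_sub (hφi : ∀ a b, IntervalIntegrable φ volume a b) (a b : ℝ) :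
    (∫ η in (0:ℝ)..b, φ η) - (∫ η in (0:ℝ)..a, φ η) = ∫ η in a..b, φ η :=
  intervalIntegral.integral_interval_sub_left (hφi 0 b) (hφi 0 a)

lemma prim_sm (hφpos : ∀ t, 0 < φ t) (hφi : ∀ a b, IntervalIntegrable φ volume a b) : StrictMono (fun t => ∫ η in (0:ℝ)..t, φ η) := by
  intro a b hab
  have h := prim_sub hφi a b
  have hpos : 0 < ∫ η in a..b, φ η :=
    intervalIntegral.intervalIntegral_pos_of_pos_on (hφi a b) (fun x _ => hφpos x) hab
  simp only []
  linarith

lemma subst_map (hφpos : ∀ t, 0 < φ t) (hφi : ∀ a b, IntervalIntegrable φ volume a b) {ε T : ℝ} (hεT : ε ≤ T) :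
    Measure.map (fun t => ∫ η in (0:ℝ)..t, φ η)
      ((volume.restrict (Set.Ioc ε T)).withDensity (fun t => ENNReal.ofReal (φ t)))
    = volume.restrict (Set.Ioc (∫ η in (0:ℝ)..ε, φ η) (∫ η in (0:ℝ)..T, φ η)) := by
  set F : ℝ → ℝ := fun t => ∫ η in (0:ℝ)..t, φ η with hF
  have hFc : Continuous F := intervalIntegral.continuous_primitive hφi 0
  have hFsm : StrictMono F := prim_sm hφpos hφi
  set ν := ((volume.restrict (Set.Ioc ε T)).withDensity (fun t => ENNReal.ofReal (φ t))) with hν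
  have key : ∀ c e : ℝ, c < e → (Measure.map F ν) (Set.Ioc c e)
      = (volume.restrict (Set.Ioc (F ε) (F T))) (Set.Ioc c e) := by
    intro c e _
    have hRHS : (volume.restrict (Set.Ioc (F ε) (F T))) (Set.Ioc c e)
        = ENNReal.ofReal (min e (F T) - max c (F ε)) := by
      rw [Measure.restrict_apply measurableSet_Ioc, Set.Ioc_inter_Ioc, Real.volume_Ioc]
    have hpre : MeasurableSet (F ⁻¹' Set.Ioc c e) :=
      hFc.measurable measurableSet_Ioc
    have hLHS0 : (Measure.map F ν) (Set.Ioc c e)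
        = ∫⁻ t in F ⁻¹' Set.Ioc c e ∩ Set.Ioc ε T, ENNReal.ofReal (φ t) := by
      rw [Measure.map_apply hFc.measurable measurableSet_Ioc, hν,
        withDensity_apply _ hpre, Measure.restrict_restrict hpre]
    set c' := max c (F ε) with hc'
    set e' := min e (F T) with he'
    have hS : F ⁻¹' Set.Ioc c e ∩ Set.Ioc ε T = F ⁻¹' Set.Ioc c' e' ∩ Set.Ioc ε T := by
      ext t
      simp only [Set.mem_inter_iff, Set.mem_preimage, Set.mem_Ioc, hc', he', max_lt_iff,
        le_min_iff]
      constructor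
      · rintro ⟨⟨h1, h2⟩, h3, h4⟩
        exact ⟨⟨⟨h1, hFsm h3⟩, h2, hFsm.monotone h4⟩, h3, h4⟩
      · rintro ⟨⟨⟨h1, _⟩, h2, _⟩, h3, h4⟩
        exact ⟨⟨h1, h2⟩, h3, h4⟩
    rw [hLHS0, hS, hRHS]
    rcases le_or_gt e' c' with h1 | h1
    · have h0 : ENNReal.ofReal (e' - c') = 0 := ENNReal.ofReal_eq_zero.mpr (by linarith)
      have hemp : Set.Ioc c' e' = (∅ : Set ℝ) := Set.Ioc_eq_empty (not_lt.mpr h1)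
      rw [hemp, h0]
      simp
    · have hc'mem : c' ∈ Set.Icc (F ε) (F T) :=
        ⟨le_max_right _ _, le_trans h1.le (min_le_right _ _)⟩
      have he'mem : e' ∈ Set.Icc (F ε) (F T) :=
        ⟨le_trans (le_max_right _ _) h1.le, min_le_right _ _⟩
      obtain ⟨tc, htcm, htc⟩ := intermediate_value_Icc hεT hFc.continuousOn hc'mem
      obtain ⟨te, htem, hte⟩ := intermediate_value_Icc hεT hFc.continuousOn he'mem
      have htcte : tc ≤ te := by
        by_contra hcon
        exact absurd (htc ▸ hte ▸ hFsm (not_le.mp hcon)) (not_lt.mpr h1.le)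
      have hS2 : F ⁻¹' Set.Ioc c' e' ∩ Set.Ioc ε T = Set.Ioc tc te := by
        ext t
        simp only [Set.mem_inter_iff, Set.mem_preimage, Set.mem_Ioc]
        constructor
        · rintro ⟨⟨h2, h3⟩, _, _⟩
          exact ⟨hFsm.lt_iff_lt.mp (htc ▸ h2), hFsm.le_iff_le.mp (hte ▸ h3)⟩
        · rintro ⟨h2, h3⟩
          refine ⟨⟨htc ▸ hFsm h2, hte ▸ hFsm.monotone h3⟩,
            lt_of_le_of_lt htcm.1 h2, le_trans h3 htem.2⟩
      rw [hS2]
      have hInt : IntegrableOn φ (Set.Ioc tc te) volume := (hφi tc te).1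
      rw [← ofReal_integral_eq_lintegral_ofReal hInt
        (Filter.Eventually.of_forall fun t => (hφpos t).le)]
      congr 1
      rw [← intervalIntegral.integral_of_le htcte, ← prim_sub hφi]
      show F te - F tc = e' - c'
      rw [htc, hte]
  exact Measure.ext_of_Ioc' _ _
    (fun a b hab => by rw [key a b hab]; exact (measure_lt_top _ _).ne) key

lemma subst_integral (hφm : Measurable φ) (hφpos : ∀ t, 0 < φ t)
    (hφi : ∀ a b, IntervalIntegrable φ volume a b) {ε T : ℝ} (hεT : ε ≤ T)
    {h : ℝ → ℝ} (hh : Measurable h) :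
    ∫ t in ε..T, φ t * h (∫ η in (0:ℝ)..t, φ η)
      = ∫ v in (∫ η in (0:ℝ)..ε, φ η)..(∫ η in (0:ℝ)..T, φ η), h v := by
  set F : ℝ → ℝ := fun t => ∫ η in (0:ℝ)..t, φ η with hF
  have hFc : Continuous F := intervalIntegral.continuous_primitive hφi 0
  have hFmono : Monotone F := (prim_sm hφpos hφi).monotone
  rw [intervalIntegral.integral_of_le (hFmono hεT), intervalIntegral.integral_of_le hεT]
  calc ∫ t in Set.Ioc ε T, φ t * h (F t)
      = ∫ t, (Real.toNNReal (φ t)) • h (F t) ∂(volume.restrict (Set.Ioc ε T)) := by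
        refine integral_congr_ae (Filter.Eventually.of_forall fun t => ?_)
        show φ t * h (F t) = (φ t).toNNReal • h (F t)
        rw [NNReal.smul_def, Real.coe_toNNReal _ (hφpos t).le, smul_eq_mul]
    _ = ∫ t, h (F t)
          ∂((volume.restrict (Set.Ioc ε T)).withDensity (fun t => ENNReal.ofReal (φ t))) := by
        have hd : (fun t => ENNReal.ofReal (φ t))
            = fun t => ((Real.toNNReal (φ t) : NNReal) : ENNReal) := rfl
        rw [hd, integral_withDensity_eq_integral_smul hφm.real_toNNReal]
    _ = ∫ v, h v ∂(Measure.map F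
          ((volume.restrict (Set.Ioc ε T)).withDensity (fun t => ENNReal.ofReal (φ t)))) := by
        rw [integral_map hFc.measurable.aemeasurable hh.aestronglyMeasurable]
    _ = ∫ v in Set.Ioc (F ε) (F T), h v := by
        simp only [hF]
        rw [subst_map hφpos hφi hεT]

lemma inv_subst {A B z : ℝ} (hA : 0 < A) (hAB : A ≤ B) (p : ℝ) :
    ∫ v in A..B, v⁻¹ ^ p * Real.exp (-z * v⁻¹) * v⁻¹ ^ (2:ℕ)
      = ∫ u in B⁻¹..A⁻¹, u ^ p * Real.exp (-z * u) := by
  have hB : 0 < B := lt_of_lt_of_le hA hAB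
  have hBA : B⁻¹ ≤ A⁻¹ := by
    rw [inv_le_inv₀ hB hA] at *
    exact hAB
  have hIcc : Set.uIcc (B⁻¹) (A⁻¹) = Set.Icc (B⁻¹) (A⁻¹) := Set.uIcc_of_le hBA
  have hpos : ∀ u ∈ Set.uIcc (B⁻¹) (A⁻¹), 0 < u := by
    intro u hu
    rw [hIcc] at hu
    exact lt_of_lt_of_le (inv_pos.mpr hB) hu.1
  have hderiv : ∀ u ∈ Set.uIcc (B⁻¹) (A⁻¹), HasDerivAt (fun y : ℝ => y⁻¹) (-((u:ℝ)^2)⁻¹) u :=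
    fun u hu => hasDerivAt_inv (ne_of_gt (hpos u hu))
  have hcont' : ContinuousOn (fun u : ℝ => -((u:ℝ)^2)⁻¹) (Set.uIcc (B⁻¹) (A⁻¹)) := by
    refine ContinuousOn.neg (ContinuousOn.inv₀ (by fun_prop) ?_)
    intro u hu
    exact pow_ne_zero _ (ne_of_gt (hpos u hu))
  have himgpos : ∀ v ∈ (fun u : ℝ => u⁻¹) '' Set.uIcc (B⁻¹) (A⁻¹), 0 < v := by
    rintro v ⟨u, hu, rfl⟩
    exact inv_pos.mpr (hpos u hu)
  have himg : ContinuousOn (fun v : ℝ => v⁻¹ ^ p * Real.exp (-z * v⁻¹) * v⁻¹ ^ (2:ℕ))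
      ((fun u : ℝ => u⁻¹) '' Set.uIcc (B⁻¹) (A⁻¹)) := by
    have hinv : ContinuousOn (fun v : ℝ => v⁻¹)
        ((fun u : ℝ => u⁻¹) '' Set.uIcc (B⁻¹) (A⁻¹)) :=
      ContinuousOn.inv₀ continuousOn_id (fun v hv => ne_of_gt (himgpos v hv))
    refine ContinuousOn.mul (ContinuousOn.mul ?_ ?_) (hinv.pow 2)
    · exact hinv.rpow_const (fun v hv => Or.inl (ne_of_gt (inv_pos.mpr (himgpos v hv))))
    · exact Real.continuous_exp.comp_continuousOn (hinv.const_smul (-z))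
  have key := intervalIntegral.integral_comp_smul_deriv' hderiv hcont' himg
  simp only [Function.comp, inv_inv] at key
  rw [intervalIntegral.integral_symm B A, ← key, ← intervalIntegral.integral_neg]
  refine intervalIntegral.integral_congr (fun u hu => ?_)
  have hu0 : u ≠ 0 := ne_of_gt (hpos u hu)
  show -(-((u:ℝ)^2)⁻¹ • (u ^ p * Real.exp (-z * u) * u ^ (2:ℕ))) = u ^ p * Real.exp (-z * u)
  rw [smul_eq_mul]
  field_simp

lemma exp_decay_bound {q v : ℝ} (hq : 0 ≤ q) (hv : 0 < v) :
    Real.exp (-q / (2 * v)) * q ≤ 2 * v := by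
  have h1 : q / (2 * v) ≤ Real.exp (q / (2 * v)) :=
    le_trans (by linarith) (Real.add_one_le_exp _)
  have h2 : q ≤ Real.exp (q / (2 * v)) * (2 * v) := (div_le_iff₀ (by positivity)).mp h1
  rw [neg_div, Real.exp_neg, mul_comm, ← div_eq_mul_inv,
    div_le_iff₀ (Real.exp_pos _)]
  linarith

section CS
variable {d : ℕ} {μ : Measure (EuclideanSpace ℝ (Fin d))} [IsProbabilityMeasure μ]

lemma integrable_of_bdd {f : EuclideanSpace ℝ (Fin d) → ℝ} (hf : Continuous f)
    {C : ℝ} (hC : ∀ y, |f y| ≤ C) : Integrable f μ :=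
  ⟨hf.aestronglyMeasurable,
    HasFiniteIntegral.of_bounded (C := C) (Eventually.of_forall fun y => by
      simpa using hC y)⟩

lemma cs_bound (x : EuclideanSpace ℝ (Fin d)) {v : ℝ} (hv : 0 < v) :
    ‖gradP d μ (Real.sqrt v) x‖ ^ 2 / pdens d μ (Real.sqrt v) x
      ≤ ∫ xt, (2 * Real.pi * v) ^ (-(d : ℝ) / 2) *
          Real.exp (-‖x - xt‖ ^ 2 / (2 * v)) * ‖xt - x‖ ^ 2 / v ^ 2 ∂μ := by
  have hr2 : Real.sqrt v ^ 2 = v := Real.sq_sqrt hv.le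
  set k : EuclideanSpace ℝ (Fin d) → ℝ := fun xt =>
    (2 * Real.pi * v) ^ (-(d : ℝ) / 2) * Real.exp (-‖x - xt‖ ^ 2 / (2 * v)) with hk
  have hC0 : (0:ℝ) < (2 * Real.pi * v) ^ (-(d : ℝ) / 2) :=
    Real.rpow_pos_of_pos (by positivity) _
  have hkpos : ∀ xt, 0 < k xt := fun xt => mul_pos hC0 (Real.exp_pos _)
  have hkcont : Continuous k := by fun_prop
  have hexp1 : ∀ xt : EuclideanSpace ℝ (Fin d), Real.exp (-‖x - xt‖ ^ 2 / (2 * v)) ≤ 1 := by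
    intro xt
    have h0 : (0:ℝ) ≤ ‖x - xt‖ ^ 2 / (2 * v) := by positivity
    rw [Real.exp_le_one_iff, neg_div]
    linarith
  have hkbd : ∀ xt, |k xt| ≤ (2 * Real.pi * v) ^ (-(d : ℝ) / 2) := by
    intro xt
    rw [abs_of_pos (hkpos xt), hk]
    simpa using mul_le_mul_of_nonneg_left (hexp1 xt) hC0.le
  -- integrability of k
  have hki : Integrable k μ := integrable_of_bdd hkcont hkbd
  -- integrability of k * ‖xt - x‖^2
  have hkn2bd : ∀ xt, |k xt * ‖xt - x‖ ^ 2| ≤ (2 * Real.pi * v) ^ (-(d : ℝ) / 2) * (2 * v) := by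
    intro xt
    have hq : (0:ℝ) ≤ ‖x - xt‖ ^ 2 := by positivity
    have hb := exp_decay_bound hq hv
    have hnn : ‖xt - x‖ ^ 2 = ‖x - xt‖ ^ 2 := by rw [norm_sub_rev]
    rw [abs_of_nonneg (by positivity : (0:ℝ) ≤ k xt * ‖xt - x‖ ^ 2), hk]
    simp only []
    rw [hnn, mul_assoc]
    exact mul_le_mul_of_nonneg_left hb hC0.le
  have hkn2i : Integrable (fun xt => k xt * ‖xt - x‖ ^ 2) μ :=
    integrable_of_bdd (by fun_prop) hkn2bd
  -- p > 0
  have hp_eq : pdens d μ (Real.sqrt v) x = ∫ xt, k xt ∂μ := by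
    simp only [pdens, hr2, hk]
  have hp_pos : 0 < pdens d μ (Real.sqrt v) x := by
    rw [hp_eq]
    rw [integral_pos_iff_support_of_nonneg_ae
      (Eventually.of_forall fun xt => (hkpos xt).le) hki]
    have : Function.support k = Set.univ := by
      ext xt; simp [Function.mem_support, (hkpos xt).ne']
    simp [this]
  set p : ℝ := pdens d μ (Real.sqrt v) x with hpdef
  set J : ℝ := ∫ xt, k xt * ‖xt - x‖ ^ 2 ∂μ with hJdef
  have hJ0 : 0 ≤ J := integral_nonneg fun xt => by positivity
  -- norm bound on gradient
  have hgrad : ‖gradP d μ (Real.sqrt v) x‖ ≤ v⁻¹ * ∫ xt, k xt * ‖xt - x‖ ∂μ := by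
    have h1 : ‖gradP d μ (Real.sqrt v) x‖
        ≤ ∫ xt, ‖(k xt / v) • (xt - x)‖ ∂μ := by
      rw [gradP]
      simp only [hr2]
      exact norm_integral_le_integral_norm _
    refine le_trans h1 ?_
    rw [← integral_const_mul]
    refine le_of_eq (integral_congr_ae (Eventually.of_forall fun xt => ?_))
    show ‖(k xt / v) • (xt - x)‖ = v⁻¹ * (k xt * ‖xt - x‖)
    rw [norm_smul, Real.norm_of_nonneg (by positivity : (0:ℝ) ≤ k xt / v)]
    field_simp
  -- Cauchy-Schwarz
  have hCS : (∫ xt, k xt * ‖xt - x‖ ∂μ) ≤ p ^ (1/2:ℝ) * J ^ (1/2:ℝ) := by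
    have hconj : Real.HolderConjugate 2 2 := Real.HolderConjugate.two_two
    have hm1 : MemLp (fun xt => Real.sqrt (k xt)) (ENNReal.ofReal 2) μ := by
      rw [show ENNReal.ofReal 2 = 2 by norm_num]
      refine (memLp_two_iff_integrable_sq
        (Real.continuous_sqrt.comp hkcont).aestronglyMeasurable).mpr ?_
      refine hki.congr (Eventually.of_forall fun xt => ?_)
      simp only [Function.comp, Real.sq_sqrt (hkpos xt).le]
    have hm2 : MemLp (fun xt => Real.sqrt (k xt) * ‖xt - x‖) (ENNReal.ofReal 2) μ := by
      rw [show ENNReal.ofReal 2 = 2 by norm_num]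
      refine (memLp_two_iff_integrable_sq
        ((Real.continuous_sqrt.comp hkcont).mul (by fun_prop)).aestronglyMeasurable).mpr ?_
      refine hkn2i.congr (Eventually.of_forall fun xt => ?_)
      simp only [Function.comp, Pi.mul_apply, mul_pow, Real.sq_sqrt (hkpos xt).le]
    have := integral_mul_le_Lp_mul_Lq_of_nonneg hconj
      (Eventually.of_forall fun xt => Real.sqrt_nonneg (k xt))
      (Eventually.of_forall fun xt => by positivity) hm1 hm2
    have hL : (∫ xt, Real.sqrt (k xt) * (Real.sqrt (k xt) * ‖xt - x‖) ∂μ)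
        = ∫ xt, k xt * ‖xt - x‖ ∂μ := by
      refine integral_congr_ae (Eventually.of_forall fun xt => ?_)
      simp only [← mul_assoc, Real.mul_self_sqrt (hkpos xt).le]
    have hR1 : (∫ xt, Real.sqrt (k xt) ^ (2:ℝ) ∂μ) = p := by
      rw [hp_eq]
      refine integral_congr_ae (Eventually.of_forall fun xt => ?_)
      simp only [Real.rpow_two, Real.sq_sqrt (hkpos xt).le]
    have hR2 : (∫ xt, (Real.sqrt (k xt) * ‖xt - x‖) ^ (2:ℝ) ∂μ) = J := by
      rw [hJdef]
      refine integral_congr_ae (Eventually.of_forall fun xt => ?_)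
      simp only [Real.rpow_two, mul_pow, Real.sq_sqrt (hkpos xt).le]
    rw [hL, hR1, hR2] at this
    exact this
  have hInk : 0 ≤ ∫ xt, k xt * ‖xt - x‖ ∂μ := integral_nonneg fun xt => by positivity
  have hchain : ‖gradP d μ (Real.sqrt v) x‖ ≤ v⁻¹ * (p ^ (1/2:ℝ) * J ^ (1/2:ℝ)) :=
    le_trans hgrad (mul_le_mul_of_nonneg_left hCS (by positivity))
  have hsq : (v⁻¹ * (p ^ (1/2:ℝ) * J ^ (1/2:ℝ))) ^ 2 = (v^2)⁻¹ * (p * J) := by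
    rw [mul_pow, mul_pow, ← Real.rpow_natCast (p ^ (1/2:ℝ)) 2,
      ← Real.rpow_natCast (J ^ (1/2:ℝ)) 2, ← Real.rpow_mul hp_pos.le, ← Real.rpow_mul hJ0]
    norm_num
  have h2 : ‖gradP d μ (Real.sqrt v) x‖ ^ 2 ≤ (v^2)⁻¹ * (p * J) := by
    rw [← hsq]
    exact pow_le_pow_left₀ (norm_nonneg _) hchain 2
  have hRHS : (∫ xt, (2 * Real.pi * v) ^ (-(d : ℝ) / 2) *
      Real.exp (-‖x - xt‖ ^ 2 / (2 * v)) * ‖xt - x‖ ^ 2 / v ^ 2 ∂μ) = (v^2)⁻¹ * J := by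
    rw [hJdef, ← integral_const_mul]
    refine integral_congr_ae (Eventually.of_forall fun xt => ?_)
    simp only [hk]
    field_simp
  rw [hRHS, div_le_iff₀ hp_pos]
  calc ‖gradP d μ (Real.sqrt v) x‖ ^ 2 ≤ (v^2)⁻¹ * (p * J) := h2
    _ = (v^2)⁻¹ * J * p := by ring
end CS

lemma phi_nonneg {a b : ℝ} (ha : 0 < a) (hab : a ≤ b) (s z : ℝ) : 0 ≤ Phi a b s z := by
  have hb : 0 < b := lt_of_lt_of_le ha hab
  have h1 : 1 / b ^ 2 ≤ 1 / a ^ 2 := by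
    rw [div_le_div_iff₀ (by positivity) (by positivity)]
    nlinarith
  refine intervalIntegral.integral_nonneg h1 (fun u hu => ?_)
  have hu0 : (0:ℝ) ≤ u := le_trans (by positivity) hu.1
  positivity

lemma zphi_le {a b : ℝ} (ha : 0 < a) (hab : a ≤ b) {s : ℝ} (hs : 1 ≤ s) {z : ℝ} (hz : 0 ≤ z) :
    z * Phi a b s z ≤ (1 / a ^ 2) ^ (s - 1) * b ^ 2 * (1 / a ^ 2 - 1 / b ^ 2) := by
  have hb : 0 < b := lt_of_lt_of_le ha hab
  have h1 : 1 / b ^ 2 ≤ 1 / a ^ 2 := by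
    rw [div_le_div_iff₀ (by positivity) (by positivity)]
    nlinarith
  rw [Phi, ← intervalIntegral.integral_const_mul]
  have hne : ∀ u ∈ Set.uIcc (1 / b ^ 2) (1 / a ^ 2), u ≠ 0 := by
    intro u hu
    rw [Set.uIcc_of_le h1] at hu
    have : (0:ℝ) < u := lt_of_lt_of_le (by positivity) hu.1
    exact this.ne'
  have hInt : IntervalIntegrable (fun u => z * (u ^ (s - 1) * Real.exp (-z * u))) volume
      (1 / b ^ 2) (1 / a ^ 2) := by
    apply ContinuousOn.intervalIntegrable
    refine continuousOn_const.mul (ContinuousOn.mul ?_ ?_)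
    · exact ContinuousOn.rpow_const continuousOn_id (fun u hu => Or.inl (hne u hu))
    · exact Real.continuous_exp.comp_continuousOn (by fun_prop)
  have hpt : ∀ u ∈ Set.Icc (1 / b ^ 2) (1 / a ^ 2),
      z * (u ^ (s - 1) * Real.exp (-z * u)) ≤ (1 / a ^ 2) ^ (s - 1) * b ^ 2 := by
    intro u hu
    have hu0 : (0:ℝ) < u := lt_of_lt_of_le (by positivity) hu.1
    have t1 : u ^ (s - 1) ≤ (1 / a ^ 2) ^ (s - 1) :=
      Real.rpow_le_rpow hu0.le hu.2 (by linarith)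
    have t2 : z * Real.exp (-z * u) ≤ b ^ 2 := by
      have e1 : Real.exp (-z * u) ≤ Real.exp (-(z / b ^ 2)) := by
        have h3 : z * (1 / b ^ 2) ≤ z * u := mul_le_mul_of_nonneg_left hu.1 hz
        rw [mul_one_div] at h3
        rw [Real.exp_le_exp]
        linarith
      have e2 : z * Real.exp (-(z / b ^ 2)) ≤ b ^ 2 := by
        rw [Real.exp_neg, ← div_eq_mul_inv, div_le_iff₀ (Real.exp_pos _)]
        have hb2 : (0:ℝ) < b ^ 2 := by positivity
        have h4 := Real.add_one_le_exp (z / b ^ 2)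
        have h5 : z / b ^ 2 * b ^ 2 ≤ (Real.exp (z / b ^ 2)) * b ^ 2 := by nlinarith
        rw [div_mul_cancel₀ _ hb2.ne'] at h5
        nlinarith
      calc z * Real.exp (-z * u) ≤ z * Real.exp (-(z / b ^ 2)) :=
            mul_le_mul_of_nonneg_left e1 hz
        _ ≤ b ^ 2 := e2
    calc z * (u ^ (s - 1) * Real.exp (-z * u))
        = u ^ (s - 1) * (z * Real.exp (-z * u)) := by ring
      _ ≤ (1 / a ^ 2) ^ (s - 1) * b ^ 2 :=
          mul_le_mul t1 t2 (by positivity) (by positivity)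
  calc (∫ u in (1 / b ^ 2)..(1 / a ^ 2), z * (u ^ (s - 1) * Real.exp (-z * u)))
      ≤ ∫ _ in (1 / b ^ 2)..(1 / a ^ 2), (1 / a ^ 2) ^ (s - 1) * b ^ 2 :=
        intervalIntegral.integral_mono_on h1 hInt (intervalIntegrable_const) hpt
    _ = (1 / a ^ 2) ^ (s - 1) * b ^ 2 * (1 / a ^ 2 - 1 / b ^ 2) := by
        rw [intervalIntegral.integral_const, smul_eq_mul]
        ring

end Aux

/-- The weighted Fisher-information-type integral is bounded by
`(2π)^{-d/2} ∫ Φ_{σ_ε}^{σ_T}((d+2)/2, |x-x̃|²/2)|x̃-x|² dμ(x̃)`, which is bounded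
uniformly in `x` by `2 (2π)^{-d/2} sup_{z ≥ 0} [z Φ_{σ_ε}^{σ_T}((d+2)/2, z)] < ∞`. -/
theorem fisher_info_bound (d : ℕ) (μ : Measure (EuclideanSpace ℝ (Fin d)))
    [IsProbabilityMeasure μ] (g : ℝ → ℝ) (hg : Measurable g) (hgpos : ∀ t, 0 < g t)
    (hgbdd : ∃ M : ℝ, ∀ t, g t ≤ M) (ε T : ℝ) (hε : 0 < ε) (hεT : ε < T)
    (x : EuclideanSpace ℝ (Fin d)) :
    BddAbove ((fun z : ℝ => z * Phi (sigma g ε) (sigma g T) (((d : ℝ) + 2) / 2) z) ''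
      Set.Ici 0) ∧
    (∫ t in ε..T, g t ^ 2 * ‖gradP d μ (sigma g t) x‖ ^ 2 / pdens d μ (sigma g t) x)
      ≤ (2 * Real.pi) ^ (-(d : ℝ) / 2) *
        ∫ xt, Phi (sigma g ε) (sigma g T) (((d : ℝ) + 2) / 2) (‖x - xt‖ ^ 2 / 2) *
          ‖xt - x‖ ^ 2 ∂μ ∧
    (2 * Real.pi) ^ (-(d : ℝ) / 2) *
        (∫ xt, Phi (sigma g ε) (sigma g T) (((d : ℝ) + 2) / 2) (‖x - xt‖ ^ 2 / 2) *
          ‖xt - x‖ ^ 2 ∂μ)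
      ≤ 2 * (2 * Real.pi) ^ (-(d : ℝ) / 2) *
        sSup ((fun z : ℝ => z * Phi (sigma g ε) (sigma g T) (((d : ℝ) + 2) / 2) z) ''
          Set.Ici 0) := by
  obtain ⟨M, hM⟩ := hgbdd
  have hM0 : 0 < M := lt_of_lt_of_le (hgpos 0) (hM 0)
  have hφm : Measurable (fun t : ℝ => g t ^ 2) := hg.pow_const 2
  have hφpos : ∀ t : ℝ, 0 < g t ^ 2 := fun t => pow_pos (hgpos t) 2
  have hφi : ∀ a b : ℝ, IntervalIntegrable (fun t => g t ^ 2) volume a b := by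
    intro a b
    rw [intervalIntegrable_iff]
    haveI : IsFiniteMeasure (volume.restrict (Set.uIoc a b)) :=
      ⟨by rw [Measure.restrict_apply_univ]; exact measure_Ioc_lt_top⟩
    exact ⟨hφm.aestronglyMeasurable, HasFiniteIntegral.of_bounded (C := M ^ 2)
      (Filter.Eventually.of_forall fun t => by
        rw [Real.norm_eq_abs, abs_of_nonneg (hφpos t).le]
        exact pow_le_pow_left₀ (hgpos t).le (hM t) 2)⟩
  have hFc : Continuous (fun t : ℝ => (∫ η in (0:ℝ)..t, g η ^ 2)) := intervalIntegral.continuous_primitive hφi 0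
  have hFsm : StrictMono (fun t : ℝ => (∫ η in (0:ℝ)..t, g η ^ 2)) := prim_sm hφpos hφi
  have hA : 0 < (∫ η in (0:ℝ)..ε, g η ^ 2) := by
    have h01 : (∫ η in (0:ℝ)..(0:ℝ), g η ^ 2) < (∫ η in (0:ℝ)..ε, g η ^ 2) := hFsm hε
    rwa [intervalIntegral.integral_same] at h01
  have hAB : (∫ η in (0:ℝ)..ε, g η ^ 2) < (∫ η in (0:ℝ)..T, g η ^ 2) := hFsm hεT
  have hB : 0 < (∫ η in (0:ℝ)..T, g η ^ 2) := hA.trans hAB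
  have hσε2 : sigma g ε ^ 2 = (∫ η in (0:ℝ)..ε, g η ^ 2) := Real.sq_sqrt hA.le
  have hσT2 : sigma g T ^ 2 = (∫ η in (0:ℝ)..T, g η ^ 2) := Real.sq_sqrt hB.le
  have hσεpos : 0 < sigma g ε := Real.sqrt_pos.mpr hA
  have hσεT : sigma g ε ≤ sigma g T := Real.sqrt_le_sqrt hAB.le
  have hs1 : (1:ℝ) ≤ ((d:ℝ) + 2) / 2 := by
    have h0d : (0:ℝ) ≤ (d:ℝ) := Nat.cast_nonneg d
    linarith
  have hsena : ((d:ℝ) + 2) / 2 - 1 = (d:ℝ) / 2 := by ring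
  have hc2 : (0:ℝ) ≤ (2 * Real.pi) ^ (-(d : ℝ) / 2) :=
    Real.rpow_nonneg (by positivity) _
  -- Part 1
  have hBdd : BddAbove ((fun z : ℝ => z * Phi (sigma g ε) (sigma g T) (((d:ℝ) + 2) / 2) z) '' Set.Ici 0) := by
    refine ⟨(1 / (sigma g ε) ^ 2) ^ (((d:ℝ) + 2) / 2 - 1) * (sigma g T) ^ 2 *
      (1 / (sigma g ε) ^ 2 - 1 / (sigma g T) ^ 2), ?_⟩
    rintro y ⟨z, hz, rfl⟩
    exact zphi_le hσεpos hσεT hs1 hz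
  refine ⟨hBdd, ?_, ?_⟩
  · -- Part 2
    have hwbd : ∀ v ∈ Set.Icc (∫ η in (0:ℝ)..ε, g η ^ 2) (∫ η in (0:ℝ)..T, g η ^ 2),
        ∀ xt : EuclideanSpace ℝ (Fin d), |(2 * Real.pi * v) ^ (-(d : ℝ) / 2) * Real.exp (-‖x - xt‖ ^ 2 / (2 * v)) * ‖xt - x‖ ^ 2 / v ^ 2|
          ≤ (2 * Real.pi * (∫ η in (0:ℝ)..ε, g η ^ 2)) ^ (-(d : ℝ) / 2) * (2 * (∫ η in (0:ℝ)..T, g η ^ 2)) / (∫ η in (0:ℝ)..ε, g η ^ 2) ^ 2 := by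
      intro v hv xt
      have hv0 : 0 < v := lt_of_lt_of_le hA hv.1
      have hq : (0:ℝ) ≤ ‖x - xt‖ ^ 2 := by positivity
      have hnegd : -(d:ℝ)/2 ≤ 0 := by
        rw [neg_div]
        exact neg_nonpos.mpr (by positivity)
      have hR0 : 0 < (2 * Real.pi * v) ^ (-(d : ℝ) / 2) :=
        Real.rpow_pos_of_pos (by positivity) _
      have hRA0 : 0 < (2 * Real.pi * (∫ η in (0:ℝ)..ε, g η ^ 2)) ^ (-(d : ℝ) / 2) :=
        Real.rpow_pos_of_pos (mul_pos (by positivity) hA) _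
      have hR : (2 * Real.pi * v) ^ (-(d : ℝ) / 2)
          ≤ (2 * Real.pi * (∫ η in (0:ℝ)..ε, g η ^ 2)) ^ (-(d : ℝ) / 2) :=
        Real.rpow_le_rpow_of_nonpos (mul_pos (by positivity) hA)
          (by nlinarith [Real.pi_pos, hv.1]) hnegd
      have hE : Real.exp (-‖x - xt‖ ^ 2 / (2 * v)) * ‖xt - x‖ ^ 2 ≤ 2 * (∫ η in (0:ℝ)..T, g η ^ 2) := by
        rw [norm_sub_rev xt x]
        calc Real.exp (-‖x - xt‖ ^ 2 / (2 * v)) * ‖x - xt‖ ^ 2 ≤ 2 * v :=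
              exp_decay_bound hq hv0
          _ ≤ 2 * (∫ η in (0:ℝ)..T, g η ^ 2) := by linarith [hv.2]
      have hWnn : (0:ℝ) ≤ (2 * Real.pi * v) ^ (-(d : ℝ) / 2) * Real.exp (-‖x - xt‖ ^ 2 / (2 * v)) * ‖xt - x‖ ^ 2 / v ^ 2 :=
        div_nonneg (mul_nonneg (mul_nonneg hR0.le (Real.exp_pos _).le) (by positivity))
          (by positivity)
      rw [abs_of_nonneg hWnn]
      have hnum : (2 * Real.pi * v) ^ (-(d : ℝ) / 2) *
          Real.exp (-‖x - xt‖ ^ 2 / (2 * v)) * ‖xt - x‖ ^ 2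
          ≤ (2 * Real.pi * (∫ η in (0:ℝ)..ε, g η ^ 2)) ^ (-(d : ℝ) / 2) * (2 * (∫ η in (0:ℝ)..T, g η ^ 2)) := by
        rw [mul_assoc]
        exact mul_le_mul hR hE (mul_nonneg (Real.exp_pos _).le (by positivity)) hRA0.le
      exact div_le_div₀ (mul_nonneg hRA0.le (by linarith)) hnum (pow_pos hA 2)
        (pow_le_pow_left₀ hA.le hv.1 2)
    have hwm : Measurable (fun p : ℝ × (EuclideanSpace ℝ (Fin d)) =>
        g p.1 ^ 2 * ((2 * Real.pi * (∫ η in (0:ℝ)..p.1, g η ^ 2)) ^ (-(d : ℝ) / 2) *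
          Real.exp (-‖x - p.2‖ ^ 2 / (2 * (∫ η in (0:ℝ)..p.1, g η ^ 2))) * ‖p.2 - x‖ ^ 2 /
          (∫ η in (0:ℝ)..p.1, g η ^ 2) ^ 2)) := by
      have hFm : Measurable (fun p : ℝ × (EuclideanSpace ℝ (Fin d)) => (∫ η in (0:ℝ)..p.1, g η ^ 2)) :=
        hFc.measurable.comp measurable_fst
      have hn1 : Measurable (fun p : ℝ × (EuclideanSpace ℝ (Fin d)) => ‖x - p.2‖ ^ 2) :=
        ((continuous_const.sub continuous_snd).norm.pow 2).measurable
      have hn2 : Measurable (fun p : ℝ × (EuclideanSpace ℝ (Fin d)) => ‖p.2 - x‖ ^ 2) :=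
        ((continuous_snd.sub continuous_const).norm.pow 2).measurable
      exact ((hg.comp measurable_fst).pow_const 2).mul
        (((((measurable_const.mul hFm).pow_const _).mul
          ((hn1.neg.div (measurable_const.mul hFm)).exp)).mul hn2).div (hFm.pow_const 2))
    have hprod : Integrable (Function.uncurry fun (t : ℝ) (xt : EuclideanSpace ℝ (Fin d)) =>
        g t ^ 2 * ((2 * Real.pi * (∫ η in (0:ℝ)..t, g η ^ 2)) ^ (-(d : ℝ) / 2) * Real.exp (-‖x - xt‖ ^ 2 / (2 * (∫ η in (0:ℝ)..t, g η ^ 2))) * ‖xt - x‖ ^ 2 / (∫ η in (0:ℝ)..t, g η ^ 2) ^ 2)) ((volume.restrict (Set.Ioc ε T)).prod μ) := by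
      have hker : (volume.restrict (Set.Ioc ε T)).prod μ
          = (volume.prod μ).restrict ((Set.Ioc ε T) ×ˢ Set.univ) := by
        rw [← Measure.prod_restrict, Measure.restrict_univ]
      rw [hker]
      haveI : IsFiniteMeasure ((volume.prod μ).restrict ((Set.Ioc ε T) ×ˢ Set.univ)) := by
        constructor
        rw [Measure.restrict_apply_univ, Measure.prod_prod]
        exact ENNReal.mul_lt_top measure_Ioc_lt_top (measure_lt_top μ _)
      refine ⟨hwm.aestronglyMeasurable, HasFiniteIntegral.of_bounded
        (C := M ^ 2 * ((2 * Real.pi * (∫ η in (0:ℝ)..ε, g η ^ 2)) ^ (-(d : ℝ) / 2) * (2 * (∫ η in (0:ℝ)..T, g η ^ 2)) / (∫ η in (0:ℝ)..ε, g η ^ 2) ^ 2)) ?_⟩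
      refine ae_restrict_of_forall_mem (measurableSet_Ioc.prod MeasurableSet.univ) ?_
      rintro ⟨t, xt⟩ ⟨ht, -⟩
      have hFt : (∫ η in (0:ℝ)..t, g η ^ 2) ∈ Set.Icc (∫ η in (0:ℝ)..ε, g η ^ 2) (∫ η in (0:ℝ)..T, g η ^ 2) :=
        ⟨(hFsm.monotone ht.1.le : _), (hFsm.monotone ht.2 : _)⟩
      have hb := hwbd _ hFt xt
      have h1 : |g t ^ 2| ≤ M ^ 2 := by
        rw [abs_of_nonneg (hφpos t).le]
        exact pow_le_pow_left₀ (hgpos t).le (hM t) 2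
      show ‖g t ^ 2 * ((2 * Real.pi * (∫ η in (0:ℝ)..t, g η ^ 2)) ^ (-(d : ℝ) / 2) * Real.exp (-‖x - xt‖ ^ 2 / (2 * (∫ η in (0:ℝ)..t, g η ^ 2))) * ‖xt - x‖ ^ 2 / (∫ η in (0:ℝ)..t, g η ^ 2) ^ 2)‖ ≤ _
      rw [Real.norm_eq_abs, abs_mul]
      exact mul_le_mul h1 hb (abs_nonneg _) (by positivity)
    have hUi : IntervalIntegrable (fun t => g t ^ 2 * ∫ xt, (2 * Real.pi * (∫ η in (0:ℝ)..t, g η ^ 2)) ^ (-(d : ℝ) / 2) * Real.exp (-‖x - xt‖ ^ 2 / (2 * (∫ η in (0:ℝ)..t, g η ^ 2))) * ‖xt - x‖ ^ 2 / (∫ η in (0:ℝ)..t, g η ^ 2) ^ 2 ∂μ) volume ε T := by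
      rw [intervalIntegrable_iff_integrableOn_Ioc_of_le hεT.le]
      refine hprod.integral_prod_left.congr (Filter.Eventually.of_forall fun t => ?_)
      show (∫ xt, g t ^ 2 * ((2 * Real.pi * (∫ η in (0:ℝ)..t, g η ^ 2)) ^ (-(d : ℝ) / 2) *
        Real.exp (-‖x - xt‖ ^ 2 / (2 * (∫ η in (0:ℝ)..t, g η ^ 2))) * ‖xt - x‖ ^ 2 /
        (∫ η in (0:ℝ)..t, g η ^ 2) ^ 2) ∂μ) = _
      exact integral_const_mul _ _
    have hptle : ∀ t ∈ Set.Icc ε T,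
        g t ^ 2 * ‖gradP d μ (sigma g t) x‖ ^ 2 / pdens d μ (sigma g t) x
          ≤ g t ^ 2 * ∫ xt, (2 * Real.pi * (∫ η in (0:ℝ)..t, g η ^ 2)) ^ (-(d : ℝ) / 2) * Real.exp (-‖x - xt‖ ^ 2 / (2 * (∫ η in (0:ℝ)..t, g η ^ 2))) * ‖xt - x‖ ^ 2 / (∫ η in (0:ℝ)..t, g η ^ 2) ^ 2 ∂μ := by
      intro t ht
      have hFt : 0 < (∫ η in (0:ℝ)..t, g η ^ 2) := lt_of_lt_of_le hA (hFsm.monotone ht.1)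
      rw [mul_div_assoc]
      refine mul_le_mul_of_nonneg_left ?_ (hφpos t).le
      exact cs_bound (μ := μ) x hFt
    have hmono : (∫ t in ε..T,
        g t ^ 2 * ‖gradP d μ (sigma g t) x‖ ^ 2 / pdens d μ (sigma g t) x)
          ≤ ∫ t in ε..T, g t ^ 2 * ∫ xt, (2 * Real.pi * (∫ η in (0:ℝ)..t, g η ^ 2)) ^ (-(d : ℝ) / 2) * Real.exp (-‖x - xt‖ ^ 2 / (2 * (∫ η in (0:ℝ)..t, g η ^ 2))) * ‖xt - x‖ ^ 2 / (∫ η in (0:ℝ)..t, g η ^ 2) ^ 2 ∂μ := by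
      by_cases hLi : IntervalIntegrable (fun t =>
        g t ^ 2 * ‖gradP d μ (sigma g t) x‖ ^ 2 / pdens d μ (sigma g t) x) volume ε T
      · exact intervalIntegral.integral_mono_on hεT.le hLi hUi hptle
      · rw [intervalIntegral.integral_undef hLi]
        refine intervalIntegral.integral_nonneg hεT.le (fun t ht => ?_)
        have hFt : 0 < (∫ η in (0:ℝ)..t, g η ^ 2) := lt_of_lt_of_le hA (hFsm.monotone ht.1)
        refine mul_nonneg (hφpos t).le (integral_nonneg fun xt => ?_)
        have hR0 : 0 < (2 * Real.pi * (∫ η in (0:ℝ)..t, g η ^ 2)) ^ (-(d : ℝ) / 2) :=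
          Real.rpow_pos_of_pos (by positivity) _
        exact div_nonneg (mul_nonneg (mul_nonneg hR0.le (Real.exp_pos _).le)
          (by positivity)) (by positivity)
    have hswap : (∫ t in ε..T, g t ^ 2 * ∫ xt, (2 * Real.pi * (∫ η in (0:ℝ)..t, g η ^ 2)) ^ (-(d : ℝ) / 2) * Real.exp (-‖x - xt‖ ^ 2 / (2 * (∫ η in (0:ℝ)..t, g η ^ 2))) * ‖xt - x‖ ^ 2 / (∫ η in (0:ℝ)..t, g η ^ 2) ^ 2 ∂μ)
        = (2 * Real.pi) ^ (-(d : ℝ) / 2) *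
          ∫ xt, Phi (sigma g ε) (sigma g T) (((d:ℝ) + 2) / 2) (‖x - xt‖ ^ 2 / 2) * ‖xt - x‖ ^ 2 ∂μ := by
      rw [intervalIntegral.integral_of_le hεT.le]
      calc (∫ t in Set.Ioc ε T, g t ^ 2 * ∫ xt, (2 * Real.pi * (∫ η in (0:ℝ)..t, g η ^ 2)) ^ (-(d : ℝ) / 2) * Real.exp (-‖x - xt‖ ^ 2 / (2 * (∫ η in (0:ℝ)..t, g η ^ 2))) * ‖xt - x‖ ^ 2 / (∫ η in (0:ℝ)..t, g η ^ 2) ^ 2 ∂μ)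
          = ∫ t in Set.Ioc ε T, ∫ xt, g t ^ 2 * ((2 * Real.pi * (∫ η in (0:ℝ)..t, g η ^ 2)) ^ (-(d : ℝ) / 2) * Real.exp (-‖x - xt‖ ^ 2 / (2 * (∫ η in (0:ℝ)..t, g η ^ 2))) * ‖xt - x‖ ^ 2 / (∫ η in (0:ℝ)..t, g η ^ 2) ^ 2) ∂μ := by
            refine integral_congr_ae (Filter.Eventually.of_forall fun t => ?_)
            exact (integral_const_mul _ _).symm
        _ = ∫ xt, (∫ t in Set.Ioc ε T, g t ^ 2 * ((2 * Real.pi * (∫ η in (0:ℝ)..t, g η ^ 2)) ^ (-(d : ℝ) / 2) * Real.exp (-‖x - xt‖ ^ 2 / (2 * (∫ η in (0:ℝ)..t, g η ^ 2))) * ‖xt - x‖ ^ 2 / (∫ η in (0:ℝ)..t, g η ^ 2) ^ 2)) ∂μ := by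
            exact integral_integral_swap hprod
        _ = ∫ xt, (2 * Real.pi) ^ (-(d : ℝ) / 2) *
              (Phi (sigma g ε) (sigma g T) (((d:ℝ) + 2) / 2) (‖x - xt‖ ^ 2 / 2) * ‖xt - x‖ ^ 2) ∂μ := by
            refine integral_congr_ae (Filter.Eventually.of_forall fun xt => ?_)
            have hmeash : Measurable (fun v : ℝ => v⁻¹ ^ ((d:ℝ)/2) * Real.exp (-(‖x - xt‖ ^ 2 / 2) * v⁻¹) * v⁻¹ ^ (2:ℕ)) := by
              refine ((measurable_inv.pow_const _).mul ?_).mul (measurable_inv.pow_const _)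
              exact ((measurable_inv.const_mul _).exp)
            calc (∫ t in Set.Ioc ε T, g t ^ 2 * ((2 * Real.pi * (∫ η in (0:ℝ)..t, g η ^ 2)) ^ (-(d : ℝ) / 2) * Real.exp (-‖x - xt‖ ^ 2 / (2 * (∫ η in (0:ℝ)..t, g η ^ 2))) * ‖xt - x‖ ^ 2 / (∫ η in (0:ℝ)..t, g η ^ 2) ^ 2))
                = ∫ t in Set.Ioc ε T, g t ^ 2 *
                    (((2 * Real.pi) ^ (-(d : ℝ) / 2) * ‖xt - x‖ ^ 2) *
                      ((∫ η in (0:ℝ)..t, g η ^ 2)⁻¹ ^ ((d:ℝ)/2) * Real.exp (-(‖x - xt‖ ^ 2 / 2) * (∫ η in (0:ℝ)..t, g η ^ 2)⁻¹) * (∫ η in (0:ℝ)..t, g η ^ 2)⁻¹ ^ (2:ℕ))) := by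
                  refine setIntegral_congr_fun measurableSet_Ioc (fun t ht => ?_)
                  have hv : 0 < (∫ η in (0:ℝ)..t, g η ^ 2) := lt_of_lt_of_le hA (hFsm.monotone ht.1.le)
                  have e1 : (2 * Real.pi * (∫ η in (0:ℝ)..t, g η ^ 2)) ^ (-(d : ℝ) / 2)
                      = (2 * Real.pi) ^ (-(d : ℝ) / 2) * (∫ η in (0:ℝ)..t, g η ^ 2)⁻¹ ^ ((d:ℝ)/2) := by
                    rw [Real.mul_rpow (by positivity) hv.le]
                    congr 1
                    rw [Real.inv_rpow hv.le, ← Real.rpow_neg hv.le, neg_div]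
                  have e2 : -‖x - xt‖ ^ 2 / (2 * (∫ η in (0:ℝ)..t, g η ^ 2))
                      = -(‖x - xt‖ ^ 2 / 2) * (∫ η in (0:ℝ)..t, g η ^ 2)⁻¹ := by
                    field_simp
                  show g t ^ 2 * ((2 * Real.pi * (∫ η in (0:ℝ)..t, g η ^ 2)) ^ (-(d : ℝ) / 2) * Real.exp (-‖x - xt‖ ^ 2 / (2 * (∫ η in (0:ℝ)..t, g η ^ 2))) * ‖xt - x‖ ^ 2 / (∫ η in (0:ℝ)..t, g η ^ 2) ^ 2) = _
                  rw [e1, e2]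
                  ring
              _ = ((2 * Real.pi) ^ (-(d : ℝ) / 2) * ‖xt - x‖ ^ 2) *
                    ∫ t in Set.Ioc ε T, g t ^ 2 * ((∫ η in (0:ℝ)..t, g η ^ 2)⁻¹ ^ ((d:ℝ)/2) * Real.exp (-(‖x - xt‖ ^ 2 / 2) * (∫ η in (0:ℝ)..t, g η ^ 2)⁻¹) * (∫ η in (0:ℝ)..t, g η ^ 2)⁻¹ ^ (2:ℕ)) := by
                  rw [← integral_const_mul]
                  refine setIntegral_congr_fun measurableSet_Ioc (fun t ht => ?_)
                  ring
              _ = ((2 * Real.pi) ^ (-(d : ℝ) / 2) * ‖xt - x‖ ^ 2) *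
                    (Phi (sigma g ε) (sigma g T) (((d:ℝ) + 2) / 2) (‖x - xt‖ ^ 2 / 2)) := by
                  congr 1
                  calc (∫ t in Set.Ioc ε T, g t ^ 2 * ((∫ η in (0:ℝ)..t, g η ^ 2)⁻¹ ^ ((d:ℝ)/2) * Real.exp (-(‖x - xt‖ ^ 2 / 2) * (∫ η in (0:ℝ)..t, g η ^ 2)⁻¹) * (∫ η in (0:ℝ)..t, g η ^ 2)⁻¹ ^ (2:ℕ)))
                      = ∫ t in ε..T, g t ^ 2 * ((∫ η in (0:ℝ)..t, g η ^ 2)⁻¹ ^ ((d:ℝ)/2) * Real.exp (-(‖x - xt‖ ^ 2 / 2) * (∫ η in (0:ℝ)..t, g η ^ 2)⁻¹) * (∫ η in (0:ℝ)..t, g η ^ 2)⁻¹ ^ (2:ℕ)) :=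
                        (intervalIntegral.integral_of_le hεT.le).symm
                    _ = ∫ v in (∫ η in (0:ℝ)..ε, g η ^ 2)..(∫ η in (0:ℝ)..T, g η ^ 2), v⁻¹ ^ ((d:ℝ)/2) * Real.exp (-(‖x - xt‖ ^ 2 / 2) * v⁻¹) * v⁻¹ ^ (2:ℕ) :=
                        subst_integral hφm hφpos hφi hεT.le hmeash
                    _ = ∫ u in (∫ η in (0:ℝ)..T, g η ^ 2)⁻¹..(∫ η in (0:ℝ)..ε, g η ^ 2)⁻¹,
                          u ^ ((d:ℝ)/2) * Real.exp (-(‖x - xt‖ ^ 2 / 2) * u) :=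
                        inv_subst hA hAB.le ((d:ℝ)/2)
                    _ = Phi (sigma g ε) (sigma g T) (((d:ℝ) + 2) / 2) (‖x - xt‖ ^ 2 / 2) := by
                        unfold Phi
                        rw [hσε2, hσT2, hsena, one_div, one_div]
              _ = (2 * Real.pi) ^ (-(d : ℝ) / 2) *
                    (Phi (sigma g ε) (sigma g T) (((d:ℝ) + 2) / 2) (‖x - xt‖ ^ 2 / 2) * ‖xt - x‖ ^ 2) := by ring
        _ = (2 * Real.pi) ^ (-(d : ℝ) / 2) *
              ∫ xt, Phi (sigma g ε) (sigma g T) (((d:ℝ) + 2) / 2) (‖x - xt‖ ^ 2 / 2) * ‖xt - x‖ ^ 2 ∂μ :=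
            integral_const_mul _ _
    exact hmono.trans (le_of_eq hswap)
  · -- Part 3
    have hple : ∀ xt : EuclideanSpace ℝ (Fin d),
        Phi (sigma g ε) (sigma g T) (((d:ℝ) + 2) / 2) (‖x - xt‖ ^ 2 / 2) * ‖xt - x‖ ^ 2 ≤ 2 * sSup ((fun z : ℝ => z * Phi (sigma g ε) (sigma g T) (((d:ℝ) + 2) / 2) z) '' Set.Ici 0) := by
      intro xt
      have hz : ‖x - xt‖ ^ 2 / 2 ∈ Set.Ici (0:ℝ) := by
        rw [Set.mem_Ici]
        positivity
      have h1 : (‖x - xt‖ ^ 2 / 2) * Phi (sigma g ε) (sigma g T) (((d:ℝ) + 2) / 2) (‖x - xt‖ ^ 2 / 2) ≤ sSup ((fun z : ℝ => z * Phi (sigma g ε) (sigma g T) (((d:ℝ) + 2) / 2) z) '' Set.Ici 0) :=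
        le_csSup hBdd ⟨_, hz, rfl⟩
      have hn : ‖xt - x‖ ^ 2 = ‖x - xt‖ ^ 2 := by rw [norm_sub_rev]
      rw [hn]
      linarith
    have hint : (∫ xt, Phi (sigma g ε) (sigma g T) (((d:ℝ) + 2) / 2) (‖x - xt‖ ^ 2 / 2) * ‖xt - x‖ ^ 2 ∂μ)
        ≤ 2 * sSup ((fun z : ℝ => z * Phi (sigma g ε) (sigma g T) (((d:ℝ) + 2) / 2) z) '' Set.Ici 0) := by
      calc (∫ xt, Phi (sigma g ε) (sigma g T) (((d:ℝ) + 2) / 2) (‖x - xt‖ ^ 2 / 2) * ‖xt - x‖ ^ 2 ∂μ)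
          ≤ ∫ _xt, 2 * sSup ((fun z : ℝ => z * Phi (sigma g ε) (sigma g T) (((d:ℝ) + 2) / 2) z) '' Set.Ici 0) ∂μ := by
            refine integral_mono_of_nonneg (Filter.Eventually.of_forall fun xt => ?_)
              (integrable_const _) (Filter.Eventually.of_forall hple)
            exact mul_nonneg (phi_nonneg hσεpos hσεT _ _) (by positivity)
        _ = 2 * sSup ((fun z : ℝ => z * Phi (sigma g ε) (sigma g T) (((d:ℝ) + 2) / 2) z) '' Set.Ici 0) := by simp
    calc (2 * Real.pi) ^ (-(d : ℝ) / 2) *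
          (∫ xt, Phi (sigma g ε) (sigma g T) (((d:ℝ) + 2) / 2) (‖x - xt‖ ^ 2 / 2) * ‖xt - x‖ ^ 2 ∂μ)
        ≤ (2 * Real.pi) ^ (-(d : ℝ) / 2) * (2 * sSup ((fun z : ℝ => z * Phi (sigma g ε) (sigma g T) (((d:ℝ) + 2) / 2) z) '' Set.Ici 0)) :=
          mul_le_mul_of_nonneg_left hint hc2
      _ = 2 * (2 * Real.pi) ^ (-(d : ℝ) / 2) * sSup ((fun z : ℝ => z * Phi (sigma g ε) (sigma g T) (((d:ℝ) + 2) / 2) z) '' Set.Ici 0) := by ring
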